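/- (Wald's error bounds for the SPRT.) Let ℓ_t be the log-likelihood ratio process and τ the first time ℓ_t exits the interval (-a₀, a₁) with a₀, a₁ > 0, deciding h₁ if ℓ_τ ≥ a₁ and h₀ if ℓ_τ ≤ -a₀. Then the error probabilities satisfy α₁ := P₀(ℓ_τ ≥ a₁) ≤ (1-α₀) e^{-a₁} and α₀ := P₁(ℓ_τ ≤ -a₀) ≤ (1-α₁) e^{-a₀}. -/

import Mathlib

open MeasureTheory Real

lemma aux_int_bound {Ω : Type*} [MeasurableSpace Ω] (μ : Measure Ω)
    [IsProbabilityMeasure μ] (f : Ω → ℝ) (hf : Measurable f) (s : Set Ω)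
    (hs : MeasurableSet s) (c : ℝ) (hc : 0 ≤ c) (hnn : ∀ ω, 0 ≤ f ω)
    (hb : ∀ ω ∈ s, f ω ≤ c) :
    ∫ ω in s, f ω ∂μ ≤ c * (μ s).toReal := by
  have hint : IntegrableOn f s μ := by
    refine Integrable.mono' (integrable_const c) hf.aestronglyMeasurable ?_
    filter_upwards [ae_restrict_mem hs] with ω hω
    rw [Real.norm_eq_abs, abs_of_nonneg (hnn ω)]
    exact hb ω hω
  have hconst : IntegrableOn (fun _ : Ω => c) s μ :=
    integrableOn_const (measure_ne_top μ s)
  calc ∫ ω in s, f ω ∂μ ≤ ∫ _ω in s, c ∂μ :=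
        setIntegral_mono_on hint hconst hs hb
    _ = (μ s).toReal * c := by rw [setIntegral_const]; rfl
    _ = c * (μ s).toReal := mul_comm _ _

lemma aux_split {Ω : Type*} [MeasurableSpace Ω] (μ : Measure Ω)
    [IsProbabilityMeasure μ] {s₀ s₁ : Set Ω} (hs₀ : MeasurableSet s₀)
    (hs₁ : MeasurableSet s₁) (hd : Disjoint s₀ s₁)
    (hcov : ∀ᵐ ω ∂μ, ω ∈ s₀ ∨ ω ∈ s₁) :
    (μ s₀).toReal + (μ s₁).toReal = 1 := by
  have hc : μ (s₀ ∪ s₁)ᶜ = 0 := by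
    refine measure_mono_null ?_ (ae_iff.mp hcov)
    intro ω hω
    simp only [Set.mem_compl_iff, Set.mem_union] at hω ⊢
    tauto
  have h1 : μ (s₀ ∪ s₁) = 1 :=
    (prob_compl_eq_zero_iff (hs₀.union hs₁)).mp hc
  have h2 : μ s₀ + μ s₁ = 1 := by rw [← measure_union hd hs₁, h1]
  have := congrArg ENNReal.toReal h2
  rwa [ENNReal.toReal_add (measure_ne_top μ s₀) (measure_ne_top μ s₁),
    ENNReal.toReal_one] at this

/-- Wald's error bounds for the SPRT: with L = ℓ_τ the stopped LLR exiting
(-a₀, a₁), the errors satisfy α₁ ≤ (1-α₀)e^{-a₁} and α₀ ≤ (1-α₁)e^{-a₀}. -/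
theorem stmt_3 {Ω : Type*} [MeasurableSpace Ω]
    (P₀ P₁ : Measure Ω) [IsProbabilityMeasure P₀] [IsProbabilityMeasure P₁]
    (L : Ω → ℝ) (hL : Measurable L) (a₀ a₁ : ℝ) (ha₀ : 0 < a₀) (ha₁ : 0 < a₁)
    (hexit1 : ∀ᵐ ω ∂P₁, L ω ≤ -a₀ ∨ a₁ ≤ L ω)
    (hexit0 : ∀ᵐ ω ∂P₀, L ω ≤ -a₀ ∨ a₁ ≤ L ω)
    (hcm0 : ∀ s : Set Ω, MeasurableSet s →
      (P₀ s).toReal = ∫ ω in s, Real.exp (-(L ω)) ∂P₁)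
    (hcm1 : ∀ s : Set Ω, MeasurableSet s →
      (P₁ s).toReal = ∫ ω in s, Real.exp (L ω) ∂P₀) :
    (P₀ {ω | a₁ ≤ L ω}).toReal ≤ (1 - (P₁ {ω | L ω ≤ -a₀}).toReal) * Real.exp (-a₁) ∧
    (P₁ {ω | L ω ≤ -a₀}).toReal ≤ (1 - (P₀ {ω | a₁ ≤ L ω}).toReal) * Real.exp (-a₀) := by
  set s₀ : Set Ω := {ω | L ω ≤ -a₀} with hs₀def
  set s₁ : Set Ω := {ω | a₁ ≤ L ω} with hs₁def
  have hs₀ : MeasurableSet s₀ := measurableSet_le hL measurable_const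
  have hs₁ : MeasurableSet s₁ := measurableSet_le measurable_const hL
  have hd : Disjoint s₀ s₁ := by
    rw [Set.disjoint_left]
    intro ω h0 h1
    simp only [hs₀def, hs₁def, Set.mem_setOf_eq] at h0 h1
    linarith
  have hsplit1 : (P₁ s₀).toReal + (P₁ s₁).toReal = 1 :=
    aux_split P₁ hs₀ hs₁ hd hexit1
  have hsplit0 : (P₀ s₀).toReal + (P₀ s₁).toReal = 1 :=
    aux_split P₀ hs₀ hs₁ hd hexit0
  constructor
  · have h := hcm0 s₁ hs₁
    have hb : ∫ ω in s₁, Real.exp (-(L ω)) ∂P₁ ≤ Real.exp (-a₁) * (P₁ s₁).toReal := by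
      refine aux_int_bound P₁ _ (by measurability) s₁ hs₁ _ (Real.exp_pos _).le
        (fun ω => (Real.exp_pos _).le) ?_
      intro ω hω
      simp only [hs₁def, Set.mem_setOf_eq] at hω
      exact Real.exp_le_exp.mpr (by linarith)
    rw [h]
    calc _ ≤ Real.exp (-a₁) * (P₁ s₁).toReal := hb
      _ = (1 - (P₁ s₀).toReal) * Real.exp (-a₁) := by
          rw [mul_comm]; congr 1; linarith
  · have h := hcm1 s₀ hs₀
    have hb : ∫ ω in s₀, Real.exp (L ω) ∂P₀ ≤ Real.exp (-a₀) * (P₀ s₀).toReal := by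
      refine aux_int_bound P₀ _ (by measurability) s₀ hs₀ _ (Real.exp_pos _).le
        (fun ω => (Real.exp_pos _).le) ?_
      intro ω hω
      simp only [hs₀def, Set.mem_setOf_eq] at hω
      exact Real.exp_le_exp.mpr (by linarith)
    rw [h]
    calc _ ≤ Real.exp (-a₀) * (P₀ s₀).toReal := hb
      _ = (1 - (P₀ s₁).toReal) * Real.exp (-a₀) := by
          rw [mul_comm]; congr 1; linarith
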